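/- Fix δ > 0. There exist constants κ > 0 and C > 0 such that for all sufficiently large T ∈ 2ℕ, |φ(δ,T) − φ(δ,∞)| ≤ C e^{−κ T}, where φ(δ,T) := λ_{δ,T} is the unique solution of Q_T(λ) = e^{−δ} and φ(δ,∞) := δ/2 − log √(2 − e^{−δ}) is the unique λ ≥ 0 with 1 − √(1 − e^{−2λ}) = e^{−δ}. In particular, φ(δ,T) − φ(δ,∞) = o(1/T) as T → ∞. -/

import Mathlib

open MeasureTheory ProbabilityTheory Filter Real Topology
open scoped ENNReal NNReal

noncomputable section

/-- The simple random walk: partial sums of the steps `X` (so `walk X 0 ω = 0`). -/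
def walk {Ω : Type*} (X : ℕ → Ω → ℤ) (n : ℕ) (ω : Ω) : ℤ := ∑ i ∈ Finset.range n, X i ω

/-- `P` together with the steps `X` is a simple symmetric random walk: `P` is a probability
measure and the steps are i.i.d. with `P(X i = 1) = P(X i = -1) = 1/2`. -/
def IsSRW {Ω : Type*} [MeasurableSpace Ω] (P : Measure Ω) (X : ℕ → Ω → ℤ) : Prop :=
  IsProbabilityMeasure P ∧ (∀ i, Measurable (X i)) ∧
    iIndepFun X P ∧
    (∀ i, P {ω | X i ω = 1} = 1 / 2) ∧ (∀ i, P {ω | X i ω = -1} = 1 / 2)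

/-- First hitting time `τ₁^T` of `T·ℤ` by the walk, with the convention that `T = 0`
encodes `T = ∞` (since `(0 : ℤ) ∣ m ↔ m = 0`, i.e. `0·ℤ = {0}`); junk value
`sInf ∅ = 0` if the walk never hits `T·ℤ`. -/
def hitT {Ω : Type*} (X : ℕ → Ω → ℤ) (T : ℕ) (ω : Ω) : ℕ :=
  sInf {n | 0 < n ∧ (T : ℤ) ∣ walk X n ω}

/-- `q_T(n) = P(τ₁^T = n)`. -/
def qFun {Ω : Type*} [MeasurableSpace Ω] (P : Measure Ω) (X : ℕ → Ω → ℤ) (T n : ℕ) : ℝ :=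
  (P {ω | hitT X T ω = n}).toReal

/-- `q_T^j(n) = P(τ₁^T = n, S_{τ₁^T} = jT)`. -/
def qjFun {Ω : Type*} [MeasurableSpace Ω] (P : Measure Ω) (X : ℕ → Ω → ℤ) (T : ℕ) (j : ℤ)
    (n : ℕ) : ℝ :=
  (P {ω | hitT X T ω = n ∧ walk X n ω = j * T}).toReal

/-- The Laplace transform `Q_T(λ) = E[e^{-λ τ₁^T}] = ∑_{n ≥ 1} e^{-λ n} P(τ₁^T = n)`,
with values in `[0,∞]`. -/
def QT {Ω : Type*} [MeasurableSpace Ω] (P : Measure Ω) (X : ℕ → Ω → ℤ) (T : ℕ) (l : ℝ) :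
    ℝ≥0∞ :=
  ∑' n : ℕ, ENNReal.ofReal (Real.exp (-l * (n + 1))) * P {ω | hitT X T ω = n + 1}

/-- `φ(δ,∞) = δ/2 - log √(2 - e^{-δ})`. -/
def phiInf (δ : ℝ) : ℝ := δ / 2 - Real.log (Real.sqrt (2 - Real.exp (-δ)))

/-- step -/
def stp (b : Bool) : ℤ := if b then 1 else -1

/-- partial sum of steps -/
def psumF {m : ℕ} (ε : Fin m → Bool) (k : ℕ) : ℤ :=
  ∑ i : Fin m, if (i : ℕ) < k then stp (ε i) else 0

/-- first-passage path count -/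
def u (T : ℕ) (x : ℤ) : ℕ → ℕ
  | 0 => if (T : ℤ) ∣ x then 1 else 0
  | n + 1 => if (T : ℤ) ∣ x then 0 else u T (x + 1) n + u T (x - 1) n

def FP (T : ℕ) (x : ℤ) {m : ℕ} (ε : Fin m → Bool) : Prop :=
  ((T : ℤ) ∣ x + psumF ε m) ∧ ∀ k < m, ¬ (T : ℤ) ∣ x + psumF ε k

instance (T : ℕ) (x : ℤ) (m : ℕ) (ε : Fin m → Bool) : Decidable (FP T x ε) := by
  unfold FP; infer_instance

lemma psumF_cons {m : ℕ} (b : Bool) (ε : Fin m → Bool) (k : ℕ) :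
    psumF (Fin.cons b ε) (k + 1) = stp b + psumF ε k := by
  unfold psumF
  rw [Fin.sum_univ_succ]
  simp only [Fin.cons_zero, Fin.cons_succ, Fin.val_zero, Fin.val_succ]
  congr 1
  · simp

lemma psumF_zero {m : ℕ} (ε : Fin m → Bool) : psumF ε 0 = 0 := by
  unfold psumF; simp

end
noncomputable section
lemma sum_pi_succ {m : ℕ} {M : Type*} [AddCommMonoid M] (f : (Fin (m+1) → Bool) → M) :
    ∑ ε : Fin (m+1) → Bool, f ε = ∑ b : Bool, ∑ t : Fin m → Bool, f (Fin.cons b t) := by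
  rw [← (Fintype.sum_equiv (Fin.consEquiv (fun _ => Bool)) _ f (fun p => rfl)),
    Fintype.sum_prod_type]
  rfl

lemma card_FP (T : ℕ) (m : ℕ) : ∀ x : ℤ,
    (Finset.univ.filter (fun ε : Fin m → Bool => FP T x ε)).card = u T x m := by
  induction m with
  | zero =>
    intro x
    by_cases h : (T : ℤ) ∣ x
    · rw [Finset.filter_true_of_mem (fun ε _ => ⟨by simpa [psumF_zero] using h, by omega⟩)]
      simp only [u, Finset.card_univ]
      rw [if_pos h]
      simp
    · rw [Finset.filter_false_of_mem, u]
      · simp [h]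
      · intro ε _ hFP
        exact h (by simpa [psumF_zero] using hFP.1)
  | succ n ih =>
    intro x
    have key : ∀ (b : Bool) (t : Fin n → Bool),
        FP T x (Fin.cons b t) ↔ (¬ (T:ℤ) ∣ x) ∧ FP T (x + stp b) t := by
      intro b t
      constructor
      · rintro ⟨h1, h2⟩
        have hx : ¬ (T:ℤ) ∣ x := by
          have := h2 0 (Nat.succ_pos n)
          simpa [psumF_zero] using this
        refine ⟨hx, ⟨?_, ?_⟩⟩
        · have := h1
          rw [psumF_cons] at this
          convert this using 1; ring
        · intro k hk
          have := h2 (k+1) (by omega)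
          rw [psumF_cons] at this
          intro hd; exact this (by convert hd using 1; ring)
      · rintro ⟨hx, h1, h2⟩
        constructor
        · rw [psumF_cons]; convert h1 using 1; ring
        · intro k hk
          match k with
          | 0 => simpa [psumF_zero] using hx
          | k+1 =>
            rw [psumF_cons]
            have := h2 k (by omega)
            intro hd; exact this (by convert hd using 1; ring)
    rw [Finset.card_filter, sum_pi_succ]
    by_cases h : (T : ℤ) ∣ x
    · rw [u]
      simp only [key, h]
      simp
    · rw [u, if_neg h]
      have : ∀ b : Bool, ∑ t : Fin n → Bool,
          (if FP T x (Fin.cons b t) then 1 else 0) = u T (x + stp b) n := by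
        intro b
        simp only [key, h, not_false_iff, true_and]
        rw [← Finset.card_filter]
        exact ih (x + stp b)
      rw [Fintype.sum_bool, this, this]
      have e2 : x + stp false = x - 1 := by simp [stp]; ring
      have e1 : x + stp true = x + 1 := by simp [stp]
      rw [e1, e2]
end
noncomputable section

lemma u_le (T : ℕ) (n : ℕ) : ∀ x : ℤ, u T x n ≤ 2 ^ n := by
  induction n with
  | zero => intro x; rw [u]; split <;> simp
  | succ n ih =>
    intro x
    rw [u]
    split
    · positivity
    · calc u T (x+1) n + u T (x-1) n ≤ 2^n + 2^n := Nat.add_le_add (ih _) (ih _)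
        _ = 2^(n+1) := by ring

lemma u_period (T : ℕ) (n : ℕ) : ∀ x : ℤ, u T (x + T) n = u T x n := by
  have hdvd : ∀ x : ℤ, ((T:ℤ) ∣ x + T) ↔ ((T:ℤ) ∣ x) := by
    intro x
    constructor
    · intro h; have := dvd_sub h (dvd_refl (T:ℤ)); simpa using this
    · intro h; exact dvd_add h (dvd_refl _)
  induction n with
  | zero => intro x; rw [u, u, if_congr (hdvd x) rfl rfl]
  | succ n ih =>
    intro x
    rw [u, u, if_congr (hdvd x) rfl rfl,
      show x + (T:ℤ) + 1 = (x+1) + T by ring, show x + (T:ℤ) - 1 = (x-1) + T by ring,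
      ih (x+1), ih (x-1)]

/-- hit condition for a path of length n+1 -/
def HitC (T : ℕ) {m : ℕ} (ε : Fin m → Bool) : Prop :=
  ((T : ℤ) ∣ psumF ε m) ∧ ∀ k < m, 0 < k → ¬ (T : ℤ) ∣ psumF ε k

instance (T m : ℕ) (ε : Fin m → Bool) : Decidable (HitC T ε) := by
  unfold HitC; infer_instance

lemma card_Hit (T n : ℕ) :
    (Finset.univ.filter (fun ε : Fin (n+1) → Bool => HitC T ε)).card
      = u T 1 n + u T (-1) n := by
  have key : ∀ (b : Bool) (t : Fin n → Bool),
      HitC T (Fin.cons b t) ↔ FP T (stp b) t := by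
    intro b t
    constructor
    · rintro ⟨h1, h2⟩
      refine ⟨?_, ?_⟩
      · rw [psumF_cons] at h1; exact h1
      · intro k hk
        have := h2 (k+1) (by omega) (by omega)
        rw [psumF_cons] at this; exact this
    · rintro ⟨h1, h2⟩
      refine ⟨by rw [psumF_cons]; exact h1, ?_⟩
      intro k hk hk2
      match k, hk2 with
      | k+1, _ =>
        rw [psumF_cons]
        exact h2 k (by omega)
  rw [Finset.card_filter, sum_pi_succ]
  have : ∀ b : Bool, ∑ t : Fin n → Bool,
      (if HitC T (Fin.cons b t) then 1 else 0) = u T (stp b) n := by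
    intro b
    simp only [key]
    rw [← Finset.card_filter]
    exact card_FP T n (stp b)
  rw [Fintype.sum_bool, this, this]
  simp [stp]

end
noncomputable section

lemma stp_mem (b : Bool) : stp b = 1 ∨ stp b = -1 := by
  cases b <;> simp [stp]

/-- the step function read off a path -/
def stpf {m : ℕ} (ε : Fin m → Bool) (i : ℕ) : ℤ :=
  if h : i < m then stp (ε ⟨i, h⟩) else 1

lemma stpf_mem {m : ℕ} (ε : Fin m → Bool) (i : ℕ) : stpf ε i = 1 ∨ stpf ε i = -1 := by
  unfold stpf
  split
  · exact stp_mem _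
  · left; rfl

lemma psumF_eq_range {m : ℕ} (ε : Fin m → Bool) {k : ℕ} (hk : k ≤ m) :
    psumF ε k = ∑ j ∈ Finset.range k, stpf ε j := by
  unfold psumF
  have step1 : ∀ i : Fin m, (if (i:ℕ) < k then stp (ε i) else 0)
      = (fun j => if j < k then stpf ε j else 0) (i : ℕ) := by
    intro i
    simp only [stpf]
    by_cases h : (i:ℕ) < k
    · rw [if_pos h, if_pos h, dif_pos i.isLt, Fin.eta]
    · rw [if_neg h, if_neg h]
  have e1 : (∑ i : Fin m, if (i:ℕ) < k then stp (ε i) else 0)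
      = ∑ j ∈ Finset.range m, (if j < k then stpf ε j else 0) := by
    rw [← Fin.sum_univ_eq_sum_range (fun j => if j < k then stpf ε j else 0) m]
    exact Finset.sum_congr rfl (fun i _ => step1 i)
  rw [e1, ← Finset.sum_filter]
  congr 1
  ext j
  simp only [Finset.mem_filter, Finset.mem_range]
  omega

variable {Ω : Type*} [MeasurableSpace Ω] (P : Measure Ω) (X : ℕ → Ω → ℤ)

lemma hitT_eq_iff (T : ℕ) (ω : Ω) {m : ℕ} (hm : 0 < m) :
    hitT X T ω = m ↔
      ((T:ℤ) ∣ walk X m ω ∧ ∀ k, 0 < k → k < m → ¬ (T:ℤ) ∣ walk X k ω) := by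
  rw [hitT]
  constructor
  · intro h
    have hne : {n | 0 < n ∧ (T:ℤ) ∣ walk X n ω}.Nonempty := by
      by_contra hco
      rw [Set.not_nonempty_iff_eq_empty] at hco
      rw [hco, Nat.sInf_empty] at h
      omega
    have hmem := Nat.sInf_mem hne
    rw [h] at hmem
    refine ⟨hmem.2, fun k hk0 hkm hdvd => ?_⟩
    have hkmem : k ∈ {n | 0 < n ∧ (T:ℤ) ∣ walk X n ω} := ⟨hk0, hdvd⟩
    have hle := Nat.sInf_le hkmem
    rw [h] at hle
    omega
  · rintro ⟨h1, h2⟩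
    have hmem : m ∈ {n | 0 < n ∧ (T:ℤ) ∣ walk X n ω} := ⟨hm, h1⟩
    refine le_antisymm (Nat.sInf_le hmem) ?_
    by_contra hc
    push_neg at hc
    have hmem2 := Nat.sInf_mem (⟨m, hmem⟩ :
      Set.Nonempty {n | 0 < n ∧ (T:ℤ) ∣ walk X n ω})
    exact h2 _ hmem2.1 hc hmem2.2

/-- cylinder event -/
def cyl {m : ℕ} (ε : Fin m → Bool) : Set Ω :=
  ⋂ i ∈ Finset.range m, {ω | X i ω = stpf ε i}

omit [MeasurableSpace Ω] in
lemma walk_of_cyl {m : ℕ} (ε : Fin m → Bool) (ω : Ω)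
    (hω : ∀ i < m, X i ω = stpf ε i) {k : ℕ} (hk : k ≤ m) :
    walk X k ω = psumF ε k := by
  rw [psumF_eq_range ε hk, walk]
  apply Finset.sum_congr rfl
  intro i hi
  exact hω i (by simp at hi; omega)

variable (hP : IsSRW P X)
include hP

lemma meas_step_set (i : ℕ) (v : ℤ) : MeasurableSet {ω | X i ω = v} :=
  hP.2.1 i (measurableSet_singleton v)

lemma cyl_measurable {m : ℕ} (ε : Fin m → Bool) : MeasurableSet (cyl X ε) :=
  Finset.measurableSet_biInter _ (fun i _ => meas_step_set P X hP i _)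

lemma P_step (i : ℕ) (v : ℤ) (hv : v = 1 ∨ v = -1) : P {ω | X i ω = v} = 2⁻¹ := by
  rcases hv with h | h
  · rw [h, hP.2.2.2.1 i, one_div]
  · rw [h, hP.2.2.2.2 i, one_div]

lemma P_cyl {m : ℕ} (ε : Fin m → Bool) : P (cyl X ε) = 2⁻¹ ^ m := by
  unfold cyl
  rw [hP.2.2.1.meas_biInter (S := Finset.range m)
    (s := fun i => {ω | X i ω = stpf ε i})
    (fun i _ => ⟨{stpf ε i}, measurableSet_singleton _, rfl⟩)]
  rw [Finset.prod_congr rfl (fun i _ => P_step P X hP i _ (stpf_mem ε i))]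
  rw [Finset.prod_const, Finset.card_range]

end
noncomputable section
variable {Ω : Type*} [MeasurableSpace Ω] (P : Measure Ω) (X : ℕ → Ω → ℤ)
variable (hP : IsSRW P X)
include hP

lemma P_good (m : ℕ) :
    P (⋂ i ∈ Finset.range m, ({ω | X i ω = 1} ∪ {ω | X i ω = -1}))ᶜ = 0 := by
  have : IsProbabilityMeasure P := hP.1
  rw [Set.compl_iInter₂]
  refine measure_biUnion_null_iff (Finset.countable_toSet _) |>.mpr ?_
  intro i _
  rw [Set.compl_union]
  have hmeas1 := meas_step_set P X hP i 1
  have hmeas2 := meas_step_set P X hP i (-1)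
  have hdisj : Disjoint {ω | X i ω = 1} {ω | X i ω = -1} := by
    rw [Set.disjoint_left]
    rintro ω h1 h2
    simp only [Set.mem_setOf_eq] at h1 h2
    rw [h1] at h2; norm_num at h2
  have hunion : P ({ω | X i ω = 1} ∪ {ω | X i ω = -1}) = 1 := by
    rw [measure_union hdisj hmeas2, hP.2.2.2.1 i, hP.2.2.2.2 i]
    rw [ENNReal.div_add_div_same, one_add_one_eq_two]
    exact ENNReal.div_self two_ne_zero ENNReal.ofNat_ne_top
  rw [← Set.compl_union, measure_compl (hmeas1.union hmeas2) (by simp), hunion,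
    measure_univ, tsub_self]

lemma P_hit (T n : ℕ) :
    P {ω | hitT X T ω = n + 1}
      = (u T 1 n + u T (-1) n : ℕ) * 2⁻¹ ^ (n + 1) := by
  classical
  set m := n + 1 with hm
  set Good := ⋂ i ∈ Finset.range m, ({ω | X i ω = 1} ∪ {ω | X i ω = -1}) with hGood
  set adm : Finset (Fin m → Bool) := Finset.univ.filter (fun ε => HitC T ε) with hadm
  set A := {ω | hitT X T ω = m} with hA
  -- A ∩ Good = union of cylinders
  have hAG : A ∩ Good = ⋃ ε ∈ adm, cyl X ε := by
    ext ω
    simp only [Set.mem_inter_iff, Set.mem_iUnion, hA, Set.mem_setOf_eq]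
    constructor
    · rintro ⟨hhit, hgood⟩
      rw [hGood, Set.mem_iInter₂] at hgood
      set ε : Fin m → Bool := fun i => decide (X (i : ℕ) ω = 1) with hε
      have hstep : ∀ i < m, X i ω = stpf ε i := by
        intro i hi
        have := hgood i (Finset.mem_range.mpr hi)
        simp only [Set.mem_union, Set.mem_setOf_eq] at this
        rw [stpf, dif_pos hi]
        rcases this with h | h
        · rw [h, hε]; simp [stp, h]
        · rw [h, hε]; simp only [stp]
          rw [if_neg]
          simp only [decide_eq_true_eq]
          rw [h]; norm_num
      have hwalk : ∀ k ≤ m, walk X k ω = psumF ε k :=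
        fun k hk => walk_of_cyl X ε ω hstep hk
      rw [hitT_eq_iff X T ω (by omega)] at hhit
      refine ⟨ε, ?_, ?_⟩
      · rw [hadm, Finset.mem_filter]
        refine ⟨Finset.mem_univ _, ?_, ?_⟩
        · rw [← hwalk m le_rfl]; exact hhit.1
        · intro k hk hk0
          rw [← hwalk k (le_of_lt hk)]
          exact hhit.2 k hk0 hk
      · rw [cyl, Set.mem_iInter₂]
        intro i hi
        exact hstep i (Finset.mem_range.mp hi)
    · rintro ⟨ε, hεadm, hεcyl⟩
      rw [cyl, Set.mem_iInter₂] at hεcyl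
      have hstep : ∀ i < m, X i ω = stpf ε i :=
        fun i hi => hεcyl i (Finset.mem_range.mpr hi)
      have hwalk : ∀ k ≤ m, walk X k ω = psumF ε k :=
        fun k hk => walk_of_cyl X ε ω hstep hk
      rw [hadm, Finset.mem_filter] at hεadm
      obtain ⟨-, hH1, hH2⟩ := hεadm
      constructor
      · rw [hitT_eq_iff X T ω (by omega)]
        refine ⟨by rw [hwalk m le_rfl]; exact hH1, ?_⟩
        intro k hk0 hk
        rw [hwalk k (le_of_lt hk)]
        exact hH2 k hk hk0
      · rw [hGood, Set.mem_iInter₂]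
        intro i hi
        have := hstep i (Finset.mem_range.mp hi)
        rcases stpf_mem ε i with h | h <;>
          simp only [Set.mem_union, Set.mem_setOf_eq] <;> rw [this, h] <;> simp
  -- P A = P (A ∩ Good)
  have hPAG : P A = P (A ∩ Good) := by
    refine le_antisymm ?_ (measure_mono Set.inter_subset_left)
    calc P A ≤ P ((A ∩ Good) ∪ Goodᶜ) := by
          apply measure_mono
          intro ω hω
          by_cases hg : ω ∈ Good
          · exact Or.inl ⟨hω, hg⟩
          · exact Or.inr hg
      _ ≤ P (A ∩ Good) + P Goodᶜ := measure_union_le _ _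
      _ = P (A ∩ Good) := by rw [P_good P X hP m, add_zero]
  -- disjointness
  have hdisj : (adm : Set (Fin m → Bool)).PairwiseDisjoint (fun ε => cyl X ε) := by
    intro ε _ ε' _ hne
    rw [Function.onFun, Set.disjoint_left]
    intro ω hω hω'
    apply hne
    rw [cyl, Set.mem_iInter₂] at hω hω'
    funext i
    have h1 := hω i (Finset.mem_range.mpr i.isLt)
    have h2 := hω' i (Finset.mem_range.mpr i.isLt)
    simp only [Set.mem_setOf_eq] at h1 h2
    rw [h1] at h2
    rw [stpf, stpf, dif_pos i.isLt, dif_pos i.isLt, Fin.eta] at h2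
    rcases Bool.eq_false_or_eq_true (ε i) with h | h <;>
      rcases Bool.eq_false_or_eq_true (ε' i) with h' | h' <;>
      rw [h, h'] at h2 ⊢ <;> first | rfl | simp [stp] at h2
  rw [hPAG, hAG, measure_biUnion_finset hdisj (fun ε _ => cyl_measurable P X hP ε)]
  rw [Finset.sum_congr rfl (fun ε _ => P_cyl P X hP ε)]
  rw [Finset.sum_const, hadm, card_Hit T n]
  rw [nsmul_eq_mul]
end
noncomputable section

/-- `ρ(l) = e^l - √(e^{2l}-1)`, the decay rate. -/
def rr (l : ℝ) : ℝ := Real.exp l - Real.sqrt (Real.exp l ^ 2 - 1)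

variable {l : ℝ}

lemma one_lt_E (hl : 0 < l) : 1 < Real.exp l := by
  rw [← Real.exp_zero]; exact Real.exp_lt_exp.mpr hl

lemma sq_sub_pos (hl : 0 < l) : 0 < Real.exp l ^ 2 - 1 := by
  have := one_lt_E hl
  nlinarith

lemma rr_pos (hl : 0 < l) : 0 < rr l := by
  have hE := one_lt_E hl
  rw [rr, sub_pos]
  rw [Real.sqrt_lt' (by positivity)]
  linarith

lemma rr_lt_one (hl : 0 < l) : rr l < 1 := by
  have hE := one_lt_E hl
  rw [rr, sub_lt_iff_lt_add, ← sub_lt_iff_lt_add']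
  rw [Real.lt_sqrt (by linarith)]
  nlinarith

lemma rr_quadratic (hl : 0 < l) : rr l ^ 2 - 2 * Real.exp l * rr l + 1 = 0 := by
  have h := Real.sq_sqrt (le_of_lt (sq_sub_pos hl))
  rw [rr]
  linear_combination h

lemma rr_key (hl : 0 < l) : Real.exp (-l) * (1 + rr l ^ 2) = 2 * rr l := by
  have hq := rr_quadratic hl
  have h1 : 1 + rr l ^ 2 = 2 * Real.exp l * rr l := by linarith
  rw [h1, Real.exp_neg, inv_mul_eq_div, div_eq_iff (Real.exp_ne_zero l)]
  ring

lemma rr_inv (hl : 0 < l) :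
    rr l * (Real.exp l + Real.sqrt (Real.exp l ^ 2 - 1)) = 1 := by
  have h := Real.sq_sqrt (le_of_lt (sq_sub_pos hl))
  rw [rr]
  linear_combination -h

lemma rr_antitone {l' : ℝ} (hl : 0 < l) (hll' : l ≤ l') : rr l' ≤ rr l := by
  have hl' : 0 < l' := lt_of_lt_of_le hl hll'
  have hE : Real.exp l ≤ Real.exp l' := Real.exp_le_exp.mpr hll'
  have hs : Real.sqrt (Real.exp l ^ 2 - 1) ≤ Real.sqrt (Real.exp l' ^ 2 - 1) := by
    apply Real.sqrt_le_sqrt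
    nlinarith [Real.exp_pos l, Real.exp_pos l']
  have hd : 0 < Real.exp l + Real.sqrt (Real.exp l ^ 2 - 1) := by
    have := one_lt_E hl
    positivity
  have hd' : 0 < Real.exp l' + Real.sqrt (Real.exp l' ^ 2 - 1) := by
    have := one_lt_E hl'
    positivity
  have e1 : rr l = (Real.exp l + Real.sqrt (Real.exp l ^ 2 - 1))⁻¹ := by
    have h1 := rr_inv hl
    field_simp
    linarith
  have e2 : rr l' = (Real.exp l' + Real.sqrt (Real.exp l' ^ 2 - 1))⁻¹ := by
    have h1 := rr_inv hl'
    field_simp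
    linarith
  rw [e1, e2]
  apply inv_anti₀ hd
  linarith

/-- `W(l) = e^{-l}·ρ(l) = 1 - √(1-e^{-2l})`, the Laplace transform of first return to 0. -/
def W (l : ℝ) : ℝ := Real.exp (-l) * rr l

lemma W_eq (hl : 0 < l) : W l = 1 - Real.sqrt (1 - Real.exp (-(2*l))) := by
  have key : Real.exp (-l) * Real.exp l = 1 := by
    rw [← Real.exp_add]; simp
  have h2 : Real.exp (-l) ^ 2 * (Real.exp l ^ 2 - 1) = 1 - Real.exp (-(2*l)) := by
    have h3 : Real.exp (-(2*l)) = Real.exp (-l) ^ 2 := by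
      rw [show -(2*l) = -l + -l by ring, Real.exp_add]; ring
    rw [h3]
    linear_combination (Real.exp (-l) * Real.exp l + 1) * key
  have h1 : Real.exp (-l) * Real.sqrt (Real.exp l ^ 2 - 1)
      = Real.sqrt (1 - Real.exp (-(2*l))) := by
    rw [← h2, Real.sqrt_mul (by positivity), Real.sqrt_sq (by positivity)]
  rw [W, rr, mul_sub, h1, key]

end
noncomputable section
variable {l : ℝ}

/-- generating function of first-passage counts from `x` -/
def FF (l : ℝ) (T : ℕ) (x : ℤ) : ℝ := ∑' n, (Real.exp (-l) / 2) ^ n * (u T x n : ℝ)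

lemma exp_neg_lt_one (hl : 0 < l) : Real.exp (-l) < 1 := by
  rw [Real.exp_lt_one_iff]; linarith

lemma summable_FF (hl : 0 < l) (T : ℕ) (x : ℤ) :
    Summable (fun n => (Real.exp (-l) / 2) ^ n * (u T x n : ℝ)) := by
  have hs0 : (0:ℝ) < Real.exp (-l) := Real.exp_pos _
  refine Summable.of_nonneg_of_le (fun n => by positivity) (fun n => ?_)
    (summable_geometric_of_lt_one (le_of_lt hs0) (exp_neg_lt_one hl))
  calc (Real.exp (-l) / 2) ^ n * (u T x n : ℝ)
      ≤ (Real.exp (-l) / 2) ^ n * (2 ^ n : ℝ) := by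
        apply mul_le_mul_of_nonneg_left _ (by positivity)
        exact_mod_cast Nat.cast_le.mpr (u_le T n x)
    _ = Real.exp (-l) ^ n := by
        rw [div_pow]
        field_simp

lemma FF_boundary (T : ℕ) (x : ℤ) (hx : (T:ℤ) ∣ x) : FF l T x = 1 := by
  rw [FF, tsum_eq_single 0]
  · rw [u, if_pos hx]; simp
  · intro n hn
    match n, hn with
    | n+1, _ =>
      rw [u, if_pos hx]
      simp

lemma FF_rec (hl : 0 < l) (T : ℕ) (x : ℤ) (hx : ¬ (T:ℤ) ∣ x) :
    FF l T x = (Real.exp (-l) / 2) * (FF l T (x+1) + FF l T (x-1)) := by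
  rw [FF, (summable_FF hl T x).tsum_eq_zero_add]
  have h0 : (Real.exp (-l) / 2) ^ 0 * (u T x 0 : ℝ) = 0 := by
    rw [u, if_neg hx]; simp
  rw [h0, zero_add]
  have hterm : ∀ n : ℕ, (Real.exp (-l) / 2) ^ (n+1) * (u T x (n+1) : ℝ)
      = (Real.exp (-l) / 2) * ((Real.exp (-l) / 2) ^ n * (u T (x+1) n : ℝ)
        + (Real.exp (-l) / 2) ^ n * (u T (x-1) n : ℝ)) := by
    intro n
    rw [u, if_neg hx]
    push_cast
    ring
  rw [tsum_congr hterm, tsum_mul_left,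
    (summable_FF hl T (x+1)).tsum_add (summable_FF hl T (x-1))]
  rfl

/-- closed-form solution -/
def gg (l : ℝ) (T x : ℕ) : ℝ := (rr l ^ x + rr l ^ (T - x)) / (1 + rr l ^ T)

lemma one_add_rr_pow_pos (hl : 0 < l) (T : ℕ) : 0 < 1 + rr l ^ T := by
  have := rr_pos hl
  positivity

lemma gg_zero (hl : 0 < l) (T : ℕ) : gg l T 0 = 1 := by
  rw [gg, pow_zero, Nat.sub_zero, div_eq_one_iff_eq (one_add_rr_pow_pos hl T).ne']

lemma gg_T (hl : 0 < l) (T : ℕ) : gg l T T = 1 := by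
  rw [gg, Nat.sub_self, pow_zero, div_eq_one_iff_eq (one_add_rr_pow_pos hl T).ne']
  ring

lemma gg_rec (hl : 0 < l) {T x : ℕ} (h0 : 0 < x) (hT : x < T) :
    gg l T x = (Real.exp (-l) / 2) * (gg l T (x+1) + gg l T (x-1)) := by
  obtain ⟨a, rfl⟩ : ∃ a, x = a + 1 := ⟨x - 1, by omega⟩
  obtain ⟨b, rfl⟩ : ∃ b, T = a + b + 2 := ⟨T - a - 2, by omega⟩
  rw [gg, gg, gg, show a + 1 + 1 = a + 2 by ring, show a + 1 - 1 = a by omega,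
    show a + b + 2 - (a + 1) = b + 1 by omega, show a + b + 2 - (a + 2) = b by omega,
    show a + b + 2 - a = b + 2 by omega]
  rw [← add_div, ← mul_div_assoc]
  congr 1
  linear_combination (-(rr l ^ a + rr l ^ b) / 2) * rr_key hl

end
noncomputable section
variable {l : ℝ}

lemma FF_eq_gg (hl : 0 < l) {T : ℕ} (hT : 0 < T) :
    ∀ x : ℕ, x ≤ T → FF l T (x : ℤ) = gg l T x := by
  classical
  set D : ℕ → ℝ := fun x => |FF l T (x : ℤ) - gg l T x| with hD
  have hne : (Finset.range (T+1)).Nonempty := ⟨0, by simp⟩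
  set M := (Finset.range (T+1)).sup' hne D with hMdef
  obtain ⟨x₀, hx₀mem, hx₀⟩ := Finset.exists_mem_eq_sup' hne D
  have hDM : ∀ x : ℕ, x ≤ T → D x ≤ M :=
    fun x hx => Finset.le_sup' D (Finset.mem_range.mpr (by omega))
  have hb0 : D 0 = 0 := by
    rw [hD]
    simp only [Nat.cast_zero]
    rw [FF_boundary T 0 (dvd_zero _), gg_zero hl, sub_self, abs_zero]
  have hbT : D T = 0 := by
    rw [hD]
    simp only
    rw [FF_boundary T T dvd_rfl, gg_T hl, sub_self, abs_zero]
  have hM0 : 0 ≤ M := by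
    have := hDM 0 (by omega)
    rw [hb0] at this
    linarith
  have hs1 : Real.exp (-l) < 1 := exp_neg_lt_one hl
  have hs0 : (0:ℝ) < Real.exp (-l) := Real.exp_pos _
  have key : M ≤ Real.exp (-l) * M := by
    conv_lhs => rw [hMdef, hx₀]
    rcases Nat.eq_zero_or_pos x₀ with h0 | h0
    · rw [h0, hb0]; positivity
    rcases eq_or_lt_of_le (Nat.lt_succ_iff.mp (Finset.mem_range.mp hx₀mem)) with hxT | hxT
    · rw [hxT, hbT]; positivity
    -- 0 < x₀ < T
    have hndvd : ¬ (T:ℤ) ∣ (x₀ : ℤ) := by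
      intro hdvd
      have := Int.le_of_dvd (by exact_mod_cast h0) hdvd
      omega
    have hrecF := FF_rec hl T (x₀ : ℤ) hndvd
    have hrecg := gg_rec hl h0 hxT
    have hc1 : ((x₀ : ℤ) + 1) = ((x₀ + 1 : ℕ) : ℤ) := by push_cast; ring
    have hc2 : ((x₀ : ℤ) - 1) = ((x₀ - 1 : ℕ) : ℤ) := by
      have : (1:ℕ) ≤ x₀ := h0
      push_cast [this]
      ring
    rw [hc1, hc2] at hrecF
    have hDp : D (x₀ + 1) ≤ M := hDM _ (by omega)
    have hDm : D (x₀ - 1) ≤ M := hDM _ (by omega)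
    have habs : D x₀ ≤ Real.exp (-l) / 2 * (D (x₀+1) + D (x₀-1)) := by
      rw [hD]
      simp only
      rw [hrecF, hrecg]
      rw [show Real.exp (-l)/2 * (FF l T ((x₀+1:ℕ):ℤ) + FF l T ((x₀-1:ℕ):ℤ))
          - Real.exp (-l)/2 * (gg l T (x₀+1) + gg l T (x₀-1))
          = Real.exp (-l)/2 * ((FF l T ((x₀+1:ℕ):ℤ) - gg l T (x₀+1))
            + (FF l T ((x₀-1:ℕ):ℤ) - gg l T (x₀-1))) by ring]
      rw [abs_mul, abs_of_pos (by positivity : (0:ℝ) < Real.exp (-l)/2)]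
      have := abs_add_le (FF l T ((x₀+1:ℕ):ℤ) - gg l T (x₀+1))
        (FF l T ((x₀-1:ℕ):ℤ) - gg l T (x₀-1))
      apply mul_le_mul_of_nonneg_left this (by positivity)
    calc D x₀ ≤ Real.exp (-l) / 2 * (D (x₀+1) + D (x₀-1)) := habs
      _ ≤ Real.exp (-l) / 2 * (M + M) := by
          apply mul_le_mul_of_nonneg_left _ (by positivity)
          linarith
      _ = Real.exp (-l) * M := by ring
  have hMz : M = 0 := by nlinarith
  intro x hx
  have h1 : D x ≤ 0 := hMz ▸ hDM x hx
  have h2 : 0 ≤ D x := abs_nonneg _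
  have : D x = 0 := le_antisymm h1 h2
  rw [hD] at this
  simp only at this
  rw [abs_eq_zero, sub_eq_zero] at this
  exact this

lemma Qreal_eq (hl : 0 < l) {T : ℕ} (hT : 0 < T) :
    ∑' n : ℕ, (Real.exp (-l) / 2) ^ (n+1) * ((u T 1 n : ℝ) + (u T (-1) n : ℝ))
      = Real.exp (-l) * (rr l + rr l ^ (T-1)) / (1 + rr l ^ T) := by
  have hterm : ∀ n : ℕ, (Real.exp (-l) / 2) ^ (n+1) * ((u T 1 n : ℝ) + (u T (-1) n : ℝ))
      = (Real.exp (-l) / 2) * ((Real.exp (-l)/2) ^ n * (u T 1 n : ℝ)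
          + (Real.exp (-l)/2) ^ n * (u T (-1) n : ℝ)) := by
    intro n; ring
  rw [tsum_congr hterm, tsum_mul_left,
    (summable_FF hl T 1).tsum_add (summable_FF hl T (-1))]
  have hFm : FF l T (-1) = FF l T ((T:ℤ) - 1) := by
    simp only [FF]
    apply tsum_congr
    intro n
    rw [show (T:ℤ) - 1 = -1 + T by ring, u_period T n (-1)]
  have h1T : (1:ℕ) ≤ T := hT
  have hF1 : FF l T (1 : ℤ) = gg l T 1 := by
    have := FF_eq_gg hl hT 1 h1T
    exact_mod_cast this
  have hFT1 : FF l T ((T:ℤ) - 1) = gg l T (T - 1) := by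
    have := FF_eq_gg hl hT (T-1) (by omega)
    rw [show (((T - 1 : ℕ)) : ℤ) = (T:ℤ) - 1 by push_cast [h1T]; ring] at this
    exact this
  have e1 : (∑' n : ℕ, (Real.exp (-l)/2) ^ n * (u T 1 n : ℝ)) = FF l T 1 := rfl
  have e2 : (∑' n : ℕ, (Real.exp (-l)/2) ^ n * (u T (-1) n : ℝ)) = FF l T (-1) := rfl
  rw [e1, e2, hFm, hF1, hFT1, gg, gg, show T - (T-1) = 1 by omega, pow_one,
    show T - 1 = T - 1 by rfl]
  rw [← add_div]
  have hD := (one_add_rr_pow_pos hl T).ne'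
  field_simp
  ring

end
noncomputable section

variable {Ω : Type*} [MeasurableSpace Ω] (P : Measure Ω) (X : ℕ → Ω → ℤ)
variable (hP : IsSRW P X) {l : ℝ}
include hP

lemma summable_Qreal (hl : 0 < l) (T : ℕ) :
    Summable (fun n : ℕ => (Real.exp (-l)/2) ^ (n+1) * ((u T 1 n : ℝ) + (u T (-1) n : ℝ))) := by
  apply Summable.congr
    ((((summable_FF hl T 1).add (summable_FF hl T (-1))).mul_left (Real.exp (-l)/2)))
  intro n
  ring

lemma QT_eq_ofReal (hl : 0 < l) (T : ℕ) :
    QT P X T l = ENNReal.ofReal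
      (∑' n : ℕ, (Real.exp (-l)/2) ^ (n+1) * ((u T 1 n : ℝ) + (u T (-1) n : ℝ))) := by
  rw [ENNReal.ofReal_tsum_of_nonneg (fun n => by positivity) (summable_Qreal P X hP hl T)]
  rw [QT]
  apply tsum_congr
  intro n
  rw [P_hit P X hP T n]
  have e1 : Real.exp (-l * (n+1)) = Real.exp (-l) ^ (n+1) := by
    rw [← Real.exp_nat_mul]
    congr 1
    push_cast
    ring
  have e2 : ((u T 1 n + u T (-1) n : ℕ) : ℝ≥0∞)
      = ENNReal.ofReal ((u T 1 n : ℝ) + (u T (-1) n : ℝ)) := by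
    rw [← ENNReal.ofReal_natCast]
    congr 1
    push_cast
    ring
  have e3 : ((2:ℝ≥0∞)⁻¹) ^ (n+1) = ENNReal.ofReal ((2⁻¹ : ℝ)) ^ (n+1) := by
    congr 1
    rw [ENNReal.ofReal_inv_of_pos (by norm_num : (0:ℝ) < 2)]
    norm_num
  rw [e2, e3, ← ENNReal.ofReal_pow (by norm_num), ← ENNReal.ofReal_mul (by positivity),
    ← ENNReal.ofReal_mul (by positivity)]
  congr 1
  rw [e1, div_pow]
  field_simp
  rw [mul_assoc, ← mul_pow]; norm_num

lemma QT_closed_form (hl : 0 < l) {T : ℕ} (hT : 0 < T) :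
    QT P X T l = ENNReal.ofReal
      (Real.exp (-l) * (rr l + rr l ^ (T-1)) / (1 + rr l ^ T)) := by
  rw [QT_eq_ofReal P X hP hl T, Qreal_eq hl hT]

lemma QT_antitone {l' : ℝ} (hll' : l ≤ l') (T : ℕ) : QT P X T l' ≤ QT P X T l := by
  apply ENNReal.tsum_le_tsum
  intro n
  apply mul_le_mul_left
  apply ENNReal.ofReal_le_ofReal
  apply Real.exp_le_exp.mpr
  have : (0:ℝ) ≤ (n:ℝ) + 1 := by positivity
  nlinarith

end
noncomputable section

variable {δ : ℝ}

lemma exp_neg_delta_lt_one (hδ : 0 < δ) : Real.exp (-δ) < 1 := by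
  rw [Real.exp_lt_one_iff]; linarith

lemma two_sub_pos (hδ : 0 < δ) : 0 < 2 - Real.exp (-δ) := by
  have := exp_neg_delta_lt_one hδ; linarith

lemma exp_neg_two_phiInf (hδ : 0 < δ) :
    Real.exp (-(2 * phiInf δ)) = Real.exp (-δ) * (2 - Real.exp (-δ)) := by
  have h2 := two_sub_pos hδ
  rw [phiInf, show -(2 * (δ/2 - Real.log (Real.sqrt (2 - Real.exp (-δ)))))
    = -δ + 2 * Real.log (Real.sqrt (2 - Real.exp (-δ))) by ring]
  rw [Real.exp_add, Real.log_sqrt (le_of_lt h2),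
    show 2 * ((Real.log (2 - Real.exp (-δ))) / 2) = Real.log (2 - Real.exp (-δ)) by ring,
    Real.exp_log h2]

lemma phiInf_pos (hδ : 0 < δ) : 0 < phiInf δ := by
  have h1 : Real.exp (-(2 * phiInf δ)) < 1 := by
    rw [exp_neg_two_phiInf hδ]
    have he := exp_neg_delta_lt_one hδ
    have hp := Real.exp_pos (-δ)
    nlinarith
  rw [show (1:ℝ) = Real.exp 0 by rw [Real.exp_zero], Real.exp_lt_exp] at h1
  linarith

lemma W_phiInf (hδ : 0 < δ) : W (phiInf δ) = Real.exp (-δ) := by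
  rw [W_eq (phiInf_pos hδ), exp_neg_two_phiInf hδ]
  have he := exp_neg_delta_lt_one hδ
  have h1 : 1 - Real.exp (-δ) * (2 - Real.exp (-δ)) = (1 - Real.exp (-δ))^2 := by ring
  rw [h1, Real.sqrt_sq (by linarith)]
  ring

/-- decomposition of the closed form as `W l + error` -/
lemma Qcf_decomp {l : ℝ} (hl : 0 < l) {T : ℕ} (hT : 0 < T) :
    Real.exp (-l) * (rr l + rr l ^ (T-1)) / (1 + rr l ^ T)
      = W l + Real.exp (-l) * rr l ^ (T-1) * (1 - rr l^2) / (1 + rr l ^ T) := by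
  obtain ⟨m, rfl⟩ : ∃ m, T = m + 1 := ⟨T - 1, by omega⟩
  rw [Nat.add_sub_cancel, W]
  have hD := (one_add_rr_pow_pos hl (m+1)).ne'
  field_simp
  ring

lemma err_pos {l : ℝ} (hl : 0 < l) (T : ℕ) :
    0 < Real.exp (-l) * rr l ^ (T-1) * (1 - rr l^2) / (1 + rr l ^ T) := by
  have h1 := rr_pos hl
  have h2 := rr_lt_one hl
  have h3 : 0 < 1 - rr l ^ 2 := by nlinarith
  have h4 := one_add_rr_pow_pos hl T
  positivity

lemma err_le {l : ℝ} (hl : 0 < l) (T : ℕ) :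
    Real.exp (-l) * rr l ^ (T-1) * (1 - rr l^2) / (1 + rr l ^ T) ≤ rr l ^ (T-1) := by
  have h1 := rr_pos hl
  have h2 := rr_lt_one hl
  have h4 := one_add_rr_pow_pos hl T
  have h5 : Real.exp (-l) < 1 := exp_neg_lt_one hl
  have h6 : (0:ℝ) < Real.exp (-l) := Real.exp_pos _
  rw [div_le_iff₀ h4]
  have h7 : (0:ℝ) < rr l ^ (T-1) := by positivity
  have h8 : (0:ℝ) ≤ rr l ^ T := by positivity
  have h9 : Real.exp (-l) * (1 - rr l ^ 2) ≤ 1 := by nlinarith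
  nlinarith [mul_le_mul_of_nonneg_left h9 (le_of_lt h7), mul_nonneg (le_of_lt h7) h8]

/-- quantitative strict monotonicity of `W` -/
lemma W_gap {ls l : ℝ} (hls : 0 < ls) (hle : ls ≤ l) :
    Real.exp (-(2*ls)) * (1 - Real.exp (-2)) / 2 * min (l - ls) 1 ≤ W ls - W l := by
  have hl : 0 < l := lt_of_lt_of_le hls hle
  rw [W_eq hls, W_eq hl]
  set A := 1 - Real.exp (-(2*ls)) with hA
  set B := 1 - Real.exp (-(2*l)) with hB
  have hA0 : 0 ≤ A := by
    have : Real.exp (-(2*ls)) ≤ 1 := by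
      rw [Real.exp_le_one_iff]; linarith
    linarith
  have hA1 : A ≤ 1 := by have := Real.exp_pos (-(2*ls)); linarith
  have hAB : A ≤ B := by
    have : Real.exp (-(2*l)) ≤ Real.exp (-(2*ls)) := by
      apply Real.exp_le_exp.mpr; linarith
    linarith
  have hB1 : B ≤ 1 := by have := Real.exp_pos (-(2*l)); linarith
  have hsA := Real.sq_sqrt hA0
  have hsB := Real.sq_sqrt (le_trans hA0 hAB)
  have hsAn := Real.sqrt_nonneg A
  have hsBn := Real.sqrt_nonneg B
  have hsA1 : Real.sqrt A ≤ 1 := by nlinarith [hsA]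
  have hsB1 : Real.sqrt B ≤ 1 := by nlinarith [hsB]
  have hmono : Real.sqrt A ≤ Real.sqrt B := Real.sqrt_le_sqrt hAB
  -- sqrt B - sqrt A ≥ (B - A)/2
  have hkey : (B - A) / 2 ≤ Real.sqrt B - Real.sqrt A := by
    nlinarith [sq_nonneg (Real.sqrt B - Real.sqrt A)]
  -- B - A = exp(-2ls)(1 - exp(-2d))
  set d := l - ls with hd
  have hd0 : 0 ≤ d := by linarith
  have hBA : B - A = Real.exp (-(2*ls)) * (1 - Real.exp (-(2*d))) := by
    rw [hA, hB]
    have : Real.exp (-(2*l)) = Real.exp (-(2*ls)) * Real.exp (-(2*d)) := by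
      rw [← Real.exp_add]; congr 1; rw [hd]; ring
    rw [this]; ring
  have hconv : (1 - Real.exp (-2)) * min d 1 ≤ 1 - Real.exp (-(2*d)) := by
    rcases le_or_gt 1 d with h1d | h1d
    · rw [min_eq_right h1d]
      have : Real.exp (-(2*d)) ≤ Real.exp (-2) := by
        apply Real.exp_le_exp.mpr; linarith
      linarith
    · rw [min_eq_left (le_of_lt h1d)]
      have hcx := convexOn_exp.2 (Set.mem_univ (0:ℝ)) (Set.mem_univ (-2:ℝ))
        (by linarith : (0:ℝ) ≤ 1 - d) hd0 (by ring)
      simp only [smul_eq_mul] at hcx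
      rw [show (1-d) * 0 + d * (-2) = -(2*d) by ring, Real.exp_zero] at hcx
      nlinarith [Real.exp_pos (-2)]
  have hexp2 : Real.exp (-2) < 1 := by rw [Real.exp_lt_one_iff]; norm_num
  have hmin0 : 0 ≤ min d 1 := le_min hd0 zero_le_one
  have hepos := Real.exp_pos (-(2*ls))
  calc Real.exp (-(2*ls)) * (1 - Real.exp (-2)) / 2 * min d 1
      ≤ Real.exp (-(2*ls)) * (1 - Real.exp (-(2*d))) / 2 := by
        rw [div_mul_eq_mul_div, div_le_div_iff₀ (by norm_num) (by norm_num)]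
        have := mul_le_mul_of_nonneg_left hconv (le_of_lt hepos)
        nlinarith
    _ = (B - A) / 2 := by rw [hBA]
    _ ≤ Real.sqrt B - Real.sqrt A := hkey
    _ = 1 - Real.sqrt A - (1 - Real.sqrt B) := by ring

end
noncomputable section


/-- `|φ(δ,T) - φ(δ,∞)| ≤ C e^{-κT}` for large even `T`; in particular
`φ(δ,T) - φ(δ,∞) = o(1/T)` as `T → ∞` along even integers. -/
theorem phi_exponential_convergence
    {Ω : Type*} [MeasurableSpace Ω] (P : Measure Ω) (X : ℕ → Ω → ℤ) (hP : IsSRW P X)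
    (δ : ℝ) (hδ : 0 < δ) (lamT : ℕ → ℝ)
    (hsolT : ∀ T : ℕ, Even T → 0 < T →
      QT P X T (lamT T) = ENNReal.ofReal (Real.exp (-δ))) :
    (∃ κ : ℝ, 0 < κ ∧ ∃ C : ℝ, 0 < C ∧ ∀ᶠ T : ℕ in atTop, Even T → 0 < T →
        |lamT T - phiInf δ| ≤ C * Real.exp (-κ * T)) ∧
    Tendsto (fun T : ℕ => (T : ℝ) * (lamT T - phiInf δ))
      (atTop ⊓ Filter.principal {T | Even T ∧ 0 < T}) (𝓝 0) := by

  have hls0 : 0 < phiInf δ := phiInf_pos hδ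
  set ls := phiInf δ with hls
  set ρ := rr ls with hρdef
  have hρ0 : 0 < ρ := rr_pos hls0
  have hρ1 : ρ < 1 := rr_lt_one hls0
  set c₀ : ℝ := Real.exp (-(2*ls)) * (1 - Real.exp (-2)) / 2 with hc₀
  have hexp2 : Real.exp (-2) < 1 := by rw [Real.exp_lt_one_iff]; norm_num
  have hc₀0 : 0 < c₀ := by
    have h1 := Real.exp_pos (-(2*ls))
    rw [hc₀]
    apply div_pos (mul_pos h1 (by linarith)) two_pos
  -- Step A : ls ≤ lamT T
  have hge : ∀ T : ℕ, Even T → 0 < T → ls ≤ lamT T := by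
    intro T hev hT0
    by_contra hlt
    push_neg at hlt
    have hmono := QT_antitone P X hP (le_of_lt hlt) T
    rw [hsolT T hev hT0, QT_closed_form P X hP hls0 hT0, Qcf_decomp hls0 hT0] at hmono
    have h2 := (ENNReal.ofReal_le_ofReal_iff (le_of_lt (Real.exp_pos (-δ)))).mp hmono
    rw [W_phiInf hδ] at h2
    have h3 := err_pos hls0 T
    linarith
  -- Step B-D : quantitative bound
  have hbound : ∀ T : ℕ, Even T → 0 < T → c₀ * min (lamT T - ls) 1 ≤ ρ ^ (T-1) := by
    intro T hev hT0
    have hle := hge T hev hT0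
    have hl0 : 0 < lamT T := lt_of_lt_of_le hls0 hle
    have hrpos := rr_pos hl0
    have hrlt := rr_lt_one hl0
    have heq : Real.exp (-(lamT T)) * (rr (lamT T) + rr (lamT T) ^ (T-1))
        / (1 + rr (lamT T) ^ T) = Real.exp (-δ) := by
      have h1 := hsolT T hev hT0
      rw [QT_closed_form P X hP hl0 hT0] at h1
      refine (ENNReal.ofReal_eq_ofReal_iff ?_ (le_of_lt (Real.exp_pos (-δ)))).mp h1
      have := one_add_rr_pow_pos hl0 T
      positivity
    rw [Qcf_decomp hl0 hT0] at heq
    have hgap : W ls - W (lamT T)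
        = Real.exp (-(lamT T)) * rr (lamT T) ^ (T-1) * (1 - rr (lamT T)^2)
          / (1 + rr (lamT T) ^ T) := by
      rw [hls, W_phiInf hδ]
      linarith
    have h2 := W_gap hls0 hle
    rw [← hc₀] at h2
    have h3 := err_le hl0 T
    have h4 : rr (lamT T) ≤ ρ := rr_antitone hls0 hle
    have h5 : rr (lamT T) ^ (T-1) ≤ ρ ^ (T-1) :=
      pow_le_pow_left₀ (le_of_lt hrpos) h4 _
    linarith
  -- choose threshold
  have htend : Tendsto (fun n : ℕ => ρ ^ n) atTop (𝓝 0) :=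
    tendsto_pow_atTop_nhds_zero_of_lt_one (le_of_lt hρ0) hρ1
  obtain ⟨N, hN⟩ := (htend.eventually (gt_mem_nhds hc₀0)).exists_forall_of_atTop
  set κ : ℝ := -Real.log ρ with hκdef
  have hκ0 : 0 < κ := by
    rw [hκdef, neg_pos]
    exact Real.log_neg hρ0 hρ1
  set C : ℝ := 1 / (c₀ * ρ) with hC
  have hC0 : 0 < C := by rw [hC]; positivity
  have hexpκ : ∀ T : ℕ, Real.exp (-κ * T) = ρ ^ T := by
    intro T
    rw [hκdef, show -(-Real.log ρ) * (T:ℝ) = (T:ℝ) * Real.log ρ by ring,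
      Real.exp_nat_mul, Real.exp_log hρ0]
  have hmain : ∀ᶠ T : ℕ in atTop, Even T → 0 < T →
      |lamT T - ls| ≤ C * Real.exp (-κ * T) := by
    filter_upwards [eventually_ge_atTop (N+1)] with T hTN hev hT0
    have hb := hbound T hev hT0
    have hsm : ρ ^ (T-1) < c₀ := hN (T-1) (by omega)
    have hle := hge T hev hT0
    set d := lamT T - ls with hd
    have hd0 : 0 ≤ d := by rw [hd]; linarith
    have hmin : min d 1 ≤ ρ ^ (T-1) / c₀ := by
      rw [le_div_iff₀ hc₀0]; linarith
    have hm1 : ρ ^ (T-1) / c₀ < 1 := by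
      rw [div_lt_one hc₀0]; linarith
    have hdlt : d < 1 := by
      by_contra hx
      push_neg at hx
      rw [min_eq_right hx] at hmin
      linarith
    rw [min_eq_left (le_of_lt hdlt)] at hmin
    have hpow : ρ ^ (T-1) = ρ ^ T / ρ := by
      rw [eq_div_iff (ne_of_gt hρ0), ← pow_succ]
      congr 1
      omega
    rw [abs_of_nonneg hd0, hexpκ]
    rw [hpow] at hmin
    calc d ≤ ρ ^ T / ρ / c₀ := le_trans hmin (by rw [div_le_div_iff₀ hc₀0 hc₀0])
      _ = C * ρ ^ T := by rw [hC]; field_simp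
  constructor
  · exact ⟨κ, hκ0, C, hC0, hmain⟩
  · -- squeeze
    have hg : Tendsto (fun T : ℕ => C * ((T:ℝ) * Real.exp (-κ * T))) atTop (𝓝 0) := by
      have h1 := (tendsto_rpow_mul_exp_neg_mul_atTop_nhds_zero 1 κ hκ0).comp
        tendsto_natCast_atTop_atTop (α := ℕ)
      have h2 : (fun T : ℕ => ((T:ℝ) ^ (1:ℝ)) * Real.exp (-κ * T))
          = fun T : ℕ => (T:ℝ) * Real.exp (-κ * T) := by
        funext T
        rw [Real.rpow_one]
      rw [show (fun x : ℝ => x ^ (1:ℝ) * Real.exp (-κ * x)) ∘ (Nat.cast : ℕ → ℝ)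
          = fun T : ℕ => ((T:ℝ) ^ (1:ℝ)) * Real.exp (-κ * T) from rfl, h2] at h1
      simpa using h1.const_mul C
    apply squeeze_zero_norm'
      (t₀ := atTop ⊓ Filter.principal {T : ℕ | Even T ∧ 0 < T})
      ?_ (hg.mono_left inf_le_left)
    rw [Filter.eventually_inf_principal]
    filter_upwards [hmain] with T hT hTS
    obtain ⟨hev, hT0⟩ := hTS
    have h1 := hT hev hT0
    rw [Real.norm_eq_abs, abs_mul, abs_of_nonneg (by positivity : (0:ℝ) ≤ (T:ℝ))]
    calc (T:ℝ) * |lamT T - ls| ≤ (T:ℝ) * (C * Real.exp (-κ * T)) :=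
        mul_le_mul_of_nonneg_left h1 (by positivity)
      _ = C * ((T:ℝ) * Real.exp (-κ * T)) := by ring


end
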